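/- Let A be an m×m positive definite Hermitian matrix. Then the function I ↦ log det A[I] defined on subsets of {1,...,m} is submodular: log det A[I] + log det A[J] ≥ log det A[I∪J] + log det A[I∩J] for all I, J ⊆ {1,...,m}, with log det A[∅] := 0. -/

import Mathlib

open Matrix
open scoped ComplexOrder

/-- The principal minor of `A` on the index set `I`; for `I = ∅` it is `1`. -/
noncomputable def pminor {m : ℕ} (A : Matrix (Fin m) (Fin m) ℂ) (I : Finset (Fin m)) : ℂ :=
  (A.submatrix (fun i : I => (i : Fin m)) (fun i : I => (i : Fin m))).det

section Aux

variable {n β : Type*} [Fintype n] [DecidableEq n] [Fintype β] [DecidableEq β]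

/-- A principal submatrix (along an injective map) of a positive definite matrix is
positive definite. -/
lemma posDef_submatrix_of_injective {M : Matrix n n ℂ} (hM : M.PosDef)
    {e : β → n} (he : Function.Injective e) : (M.submatrix e e).PosDef := by
  refine PosDef.of_dotProduct_mulVec_pos (hM.1.submatrix e) fun x hx => ?_
  set P : Matrix n β ℂ := (1 : Matrix n n ℂ).submatrix id e with hP
  have key : M.submatrix e e = Pᴴ * M * P := by
    ext i j
    simp [hP, Matrix.mul_apply, Matrix.one_apply, Finset.sum_ite_eq, Finset.sum_ite_eq',
      Matrix.conjTranspose_apply, apply_ite, eq_comm]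
  have hPx : P *ᵥ x ≠ 0 := by
    obtain ⟨i, hi⟩ := Function.ne_iff.mp hx
    have hvi : (P *ᵥ x) (e i) = x i := by
      simp [hP, Matrix.mulVec, dotProduct, Matrix.one_apply, he.eq_iff,
        Finset.sum_ite_eq, Finset.sum_ite_eq']
    intro h
    exact hi (by rw [← hvi, h]; rfl)
  rw [key]
  simpa only [star_mulVec, dotProduct_mulVec, vecMul_vecMul] using hM.dotProduct_mulVec_pos hPx

end Aux

section Pminor

variable {m : ℕ}

lemma pminor_eq (A : Matrix (Fin m) (Fin m) ℂ) {I : Finset (Fin m)} {β : Type*}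
    [Fintype β] [DecidableEq β] (f : β → Fin m) (hf : Function.Injective f)
    (hrange : ∀ x, x ∈ I ↔ x ∈ Set.range f) :
    pminor A I = (A.submatrix f f).det := by
  have hsurj : Function.Surjective (fun b => (⟨f b, (hrange (f b)).2 ⟨b, rfl⟩⟩ : I)) := by
    rintro ⟨x, hx⟩
    obtain ⟨b, hb⟩ := (hrange x).1 hx
    exact ⟨b, Subtype.ext hb⟩
  have hinj : Function.Injective (fun b => (⟨f b, (hrange (f b)).2 ⟨b, rfl⟩⟩ : I)) := by
    intro a b h
    exact hf (congrArg Subtype.val h)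
  set e : β ≃ I := Equiv.ofBijective _ ⟨hinj, hsurj⟩ with he
  have : (A.submatrix (fun i : I => (i : Fin m)) (fun i : I => (i : Fin m))).submatrix e e
      = A.submatrix f f := by
    ext i j; rfl
  rw [pminor, ← Matrix.det_submatrix_equiv_self e, this]

lemma pminor_posDef {A : Matrix (Fin m) (Fin m) ℂ} (hA : A.PosDef) (I : Finset (Fin m)) :
    0 < (pminor A I).re ∧ (pminor A I).im = 0 := by
  have h : (A.submatrix (fun i : I => (i : Fin m)) (fun i : I => (i : Fin m))).PosDef :=
    posDef_submatrix_of_injective hA (fun a b h => Subtype.ext h)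
  have := h.det_pos
  rw [Complex.lt_def] at this
  exact ⟨by simpa [pminor] using this.1, by simpa [pminor] using this.2.symm⟩

end Pminor


lemma sum_map_unit_injective {α : Type*} (v : Fin 2) :
    Function.Injective (Sum.map (id : α → α) fun _ : Unit => v) := by
  rintro (a | a) (b | b) h
  · simp only [Sum.map_inl, Sum.inl.injEq, id_eq] at h
    exact h ▸ rfl
  · simp at h
  · simp at h
  · exact congrArg Sum.inr (Subsingleton.elim a b)

section Core

variable {α : Type*} [Fintype α] [DecidableEq α]

/-- The core Schur-complement inequality:
`det M * det M[α] ≤ det M[α∪{k}] * det M[α∪{l}]` for a positive definite matrix on `α ⊕ Fin 2`. -/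
lemma core_ineq (M : Matrix (α ⊕ Fin 2) (α ⊕ Fin 2) ℂ) (hM : M.PosDef) :
    M.det.re * (M.submatrix Sum.inl Sum.inl).det.re ≤
      (M.submatrix (Sum.map id fun _ : Unit => (0 : Fin 2))
          (Sum.map id fun _ : Unit => (0 : Fin 2))).det.re *
        (M.submatrix (Sum.map id fun _ : Unit => (1 : Fin 2))
          (Sum.map id fun _ : Unit => (1 : Fin 2))).det.re := by
  set A : Matrix α α ℂ := M.submatrix Sum.inl Sum.inl with hAdef
  set B : Matrix α (Fin 2) ℂ := M.submatrix Sum.inl Sum.inr with hBdef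
  set C : Matrix (Fin 2) α ℂ := M.submatrix Sum.inr Sum.inl with hCdef
  set D : Matrix (Fin 2) (Fin 2) ℂ := M.submatrix Sum.inr Sum.inr with hDdef
  have hA : A.PosDef := posDef_submatrix_of_injective hM Sum.inl_injective
  letI : Invertible A := hA.isUnit.invertible
  have hC : C = Bᴴ := by
    ext i j
    exact (hM.1.apply _ _).symm
  have hMeq : M = fromBlocks A B C D := by
    ext i j
    cases i <;> cases j <;> rfl
  set S : Matrix (Fin 2) (Fin 2) ℂ := D - C * A⁻¹ * B with hSdef
  have hdetM : M.det = A.det * S.det := by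
    rw [hMeq, det_fromBlocks₁₁, invOf_eq_nonsing_inv]
  -- the two one-element extensions
  have hsubk : M.submatrix (Sum.map id fun _ : Unit => (0 : Fin 2))
      (Sum.map id fun _ : Unit => (0 : Fin 2)) =
      fromBlocks A (B.submatrix id fun _ : Unit => 0)
        (C.submatrix (fun _ : Unit => 0) id) (D.submatrix (fun _ : Unit => 0) fun _ => 0) := by
    ext i j
    cases i <;> cases j <;> rfl
  have hsubl : M.submatrix (Sum.map id fun _ : Unit => (1 : Fin 2))
      (Sum.map id fun _ : Unit => (1 : Fin 2)) =
      fromBlocks A (B.submatrix id fun _ : Unit => 1)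
        (C.submatrix (fun _ : Unit => 1) id) (D.submatrix (fun _ : Unit => 1) fun _ => 1) := by
    ext i j
    cases i <;> cases j <;> rfl
  have hmulk : ∀ v : Fin 2, (C.submatrix (fun _ : Unit => v) id) * ⅟A *
      (B.submatrix id fun _ : Unit => v) = (C * A⁻¹ * B).submatrix (fun _ : Unit => v)
        (fun _ : Unit => v) := by
    intro v
    rw [invOf_eq_nonsing_inv]
    ext u w
    simp [Matrix.mul_apply]
  have hdetk : (M.submatrix (Sum.map id fun _ : Unit => (0 : Fin 2))
      (Sum.map id fun _ : Unit => (0 : Fin 2))).det = A.det * S 0 0 := by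
    rw [hsubk, det_fromBlocks₁₁, hmulk 0]
    congr 1
    rw [det_unique]
    simp [hSdef]
  have hdetl : (M.submatrix (Sum.map id fun _ : Unit => (1 : Fin 2))
      (Sum.map id fun _ : Unit => (1 : Fin 2))).det = A.det * S 1 1 := by
    rw [hsubl, det_fromBlocks₁₁, hmulk 1]
    congr 1
    rw [det_unique]
    simp [hSdef]
  have hdetS : S.det = S 0 0 * S 1 1 - S 0 1 * S 1 0 := Matrix.det_fin_two S
  -- S is Hermitian
  have hS : S.IsHermitian := by
    have hblk : (fromBlocks A B Bᴴ D).IsHermitian := by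
      rw [← hC, ← hMeq]; exact hM.1
    have := (Matrix.IsHermitian.fromBlocks₁₁ B D hA.1).mp hblk
    rwa [hSdef, hC]
  have h10 : S 1 0 = star (S 0 1) := (hS.apply 1 0).symm
  -- positivity and realness of the four determinants
  have hMpos := hM.det_pos
  rw [Complex.lt_def] at hMpos
  have hApos := hA.det_pos
  rw [Complex.lt_def] at hApos
  have hKpos := (posDef_submatrix_of_injective hM (sum_map_unit_injective 0)).det_pos
  rw [Complex.lt_def] at hKpos
  have hLpos := (posDef_submatrix_of_injective hM (sum_map_unit_injective 1)).det_pos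
  rw [Complex.lt_def] at hLpos
  simp only [Complex.zero_re, Complex.zero_im] at hMpos hApos hKpos hLpos
  have ha : A.det = ((A.det.re : ℝ) : ℂ) := by
    apply Complex.ext <;> simp [← hApos.2]
  -- the key identity
  have key : (M.submatrix (Sum.map id fun _ : Unit => (0 : Fin 2))
        (Sum.map id fun _ : Unit => (0 : Fin 2))).det *
      (M.submatrix (Sum.map id fun _ : Unit => (1 : Fin 2))
        (Sum.map id fun _ : Unit => (1 : Fin 2))).det =
      M.det * A.det + ((A.det.re ^ 2 * Complex.normSq (S 0 1) : ℝ) : ℂ) := by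
    rw [hdetk, hdetl, hdetM, hdetS, h10, Complex.star_def, Complex.mul_conj]
    rw [ha]
    push_cast
    simp only [Complex.ofReal_re]
    ring
  have hre := congrArg Complex.re key
  rw [Complex.add_re, Complex.mul_re, Complex.mul_re, Complex.ofReal_re] at hre
  rw [← hKpos.2, ← hLpos.2, ← hMpos.2, ← hApos.2] at hre
  simp only [mul_zero, sub_zero, zero_mul] at hre
  nlinarith [Complex.normSq_nonneg (S 0 1), sq_nonneg A.det.re, hre]

end Core

section Steps

variable {m : ℕ} {A : Matrix (Fin m) (Fin m) ℂ}

/-- Codimension-one Koteljanskii inequality. -/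
lemma step1 (hA : A.PosDef) {S : Finset (Fin m)} {k l : Fin m}
    (hk : k ∉ S) (hl : l ∉ S) (hkl : k ≠ l) :
    (pminor A (insert k (insert l S))).re * (pminor A S).re ≤
      (pminor A (insert k S)).re * (pminor A (insert l S)).re := by
  classical
  set c : ↥S → Fin m := fun s => (s : Fin m) with hc
  have elim_inj : ∀ t : Fin m, t ∉ S →
      Function.Injective (Sum.elim c (fun _ : Unit => t)) := by
    intro t ht
    rintro (a | a) (b | b) h <;> simp only [Sum.elim_inl, Sum.elim_inr, hc] at h
    · exact congrArg Sum.inl (Subtype.ext h)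
    · exact absurd (h ▸ a.2) ht
    · exact absurd (h.symm ▸ b.2) ht
    · exact congrArg Sum.inr (Subsingleton.elim a b)
  have elim_range : ∀ t : Fin m, ∀ x : Fin m,
      x ∈ insert t S ↔ x ∈ Set.range (Sum.elim c (fun _ : Unit => t)) := by
    intro t x
    simp only [Finset.mem_insert]
    constructor
    · rintro (rfl | hx)
      · exact ⟨Sum.inr (), rfl⟩
      · exact ⟨Sum.inl ⟨x, hx⟩, rfl⟩
    · rintro ⟨(a | a), rfl⟩
      · exact Or.inr a.2
      · exact Or.inl rfl
  set g : (↥S ⊕ Fin 2) → Fin m :=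
    Sum.elim c (fun j : Fin 2 => if j = 0 then k else l) with hg
  have hval : ∀ j : Fin 2, (if j = 0 then k else l) = k ∨ (if j = 0 then k else l) = l := by
    intro j
    by_cases h : j = 0 <;> simp [h]
  have hnot : ∀ j : Fin 2, (if j = 0 then k else l) ∉ S := by
    intro j
    rcases hval j with h | h <;> rw [h] <;> assumption
  have hginj : Function.Injective g := by
    rintro (a | a) (b | b) h <;> simp only [hg, Sum.elim_inl, Sum.elim_inr, hc] at h
    · exact congrArg Sum.inl (Subtype.ext h)
    · exact absurd (h ▸ a.2) (hnot b)
    · exact absurd (h.symm ▸ b.2) (hnot a)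
    · refine congrArg Sum.inr ?_
      fin_cases a <;> fin_cases b <;> simp_all
  set M := A.submatrix g g with hM
  have hMpd : M.PosDef := posDef_submatrix_of_injective hA hginj
  have hcore := core_ineq M hMpd
  have hck : g ∘ (Sum.map id fun _ : Unit => (0 : Fin 2)) =
      Sum.elim c (fun _ : Unit => k) := by
    funext x
    rcases x with a | a
    · rfl
    · simp [hg]
  have hcl : g ∘ (Sum.map id fun _ : Unit => (1 : Fin 2)) =
      Sum.elim c (fun _ : Unit => l) := by
    funext x
    rcases x with a | a
    · rfl
    · simp only [hg, Function.comp_apply, Sum.map_inr, Sum.elim_inr]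
      rw [if_neg (by decide)]
  have e0 : pminor A (insert k (insert l S)) = M.det := by
    refine pminor_eq A g hginj fun x => ?_
    simp only [Finset.mem_insert]
    constructor
    · rintro (rfl | rfl | hx)
      · exact ⟨Sum.inr 0, by simp [hg]⟩
      · refine ⟨Sum.inr 1, ?_⟩
        simp only [hg, Sum.elim_inr]
        rw [if_neg (by decide)]
      · exact ⟨Sum.inl ⟨x, hx⟩, rfl⟩
    · rintro ⟨(a | a), rfl⟩
      · exact Or.inr (Or.inr a.2)
      · rcases hval a with h | h <;> simp only [hg, Sum.elim_inr, h] <;> tauto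
  have e1 : pminor A S = (M.submatrix Sum.inl Sum.inl).det := by
    rw [hM, Matrix.submatrix_submatrix]
    rfl
  have e2 : pminor A (insert k S) = (M.submatrix (Sum.map id fun _ : Unit => (0 : Fin 2))
      (Sum.map id fun _ : Unit => (0 : Fin 2))).det := by
    rw [hM, Matrix.submatrix_submatrix, hck]
    exact pminor_eq A _ (elim_inj k hk) (elim_range k)
  have e3 : pminor A (insert l S) = (M.submatrix (Sum.map id fun _ : Unit => (1 : Fin 2))
      (Sum.map id fun _ : Unit => (1 : Fin 2))).det := by
    rw [hM, Matrix.submatrix_submatrix, hcl]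
    exact pminor_eq A _ (elim_inj l hl) (elim_range l)
  rw [e0, e1, e2, e3]
  exact hcore

/-- Diminishing returns. -/
lemma step2 (hA : A.PosDef) :
    ∀ T : Finset (Fin m), ∀ S ⊆ T, ∀ k ∉ T,
      (pminor A (insert k T)).re * (pminor A S).re ≤
        (pminor A (insert k S)).re * (pminor A T).re := by
  classical
  intro T
  induction T using Finset.strongInductionOn with
  | _ T ih =>
    intro S hST k hk
    by_cases hTS : T ⊆ S
    · have : S = T := Finset.Subset.antisymm hST hTS
      subst this
      exact le_of_eq rfl
    · obtain ⟨l, hlT, hlS⟩ := Finset.not_subset.mp hTS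
      set T' := T.erase l with hT'
      have hss : T' ⊂ T := Finset.erase_ssubset hlT
      have hST' : S ⊆ T' := Finset.subset_erase.mpr ⟨hST, hlS⟩
      have hkT' : k ∉ T' := fun h => hk (Finset.erase_subset _ _ h)
      have hlT' : l ∉ T' := Finset.notMem_erase _ _
      have hkl : k ≠ l := fun h => hk (h ▸ hlT)
      have hTeq : T = insert l T' := (Finset.insert_erase hlT).symm
      have A1 := step1 hA hkT' hlT' hkl
      have IH := ih T' hss S hST' k hkT'
      have p1 := (pminor_posDef hA T').1
      have p2 := (pminor_posDef hA S).1
      have p3 := (pminor_posDef hA (insert l T')).1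
      have p4 := (pminor_posDef hA (insert k T')).1
      have p5 := (pminor_posDef hA (insert k S)).1
      have p6 := (pminor_posDef hA (insert k (insert l T'))).1
      rw [hTeq]
      have H : (pminor A (insert k (insert l T'))).re * (pminor A S).re *
          (pminor A T').re ≤
          (pminor A (insert k S)).re * (pminor A (insert l T')).re * (pminor A T').re := by
        nlinarith [mul_le_mul_of_nonneg_right A1 p2.le, mul_le_mul_of_nonneg_right IH p3.le]
      exact le_of_mul_le_mul_right H p1

/-- Koteljanskii's inequality for products of principal minors. -/
lemma step3 (hA : A.PosDef) :
    ∀ I J : Finset (Fin m),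
      (pminor A (I ∪ J)).re * (pminor A (I ∩ J)).re ≤
        (pminor A I).re * (pminor A J).re := by
  classical
  intro I
  induction I using Finset.strongInductionOn with
  | _ I ih =>
    intro J
    by_cases hIJ : I ⊆ J
    · rw [Finset.union_eq_right.mpr hIJ, Finset.inter_eq_left.mpr hIJ]
      exact le_of_eq (mul_comm _ _)
    · obtain ⟨k, hkI, hkJ⟩ := Finset.not_subset.mp hIJ
      set I' := I.erase k with hI'
      have hss : I' ⊂ I := Finset.erase_ssubset hkI
      have hkI' : k ∉ I' := Finset.notMem_erase _ _
      have hkU : k ∉ I' ∪ J := by simp [hkI', hkJ]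
      have hIeq : I = insert k I' := (Finset.insert_erase hkI).symm
      have hUeq : I ∪ J = insert k (I' ∪ J) := by
        rw [hIeq, Finset.insert_union]
      have hcap : I ∩ J = I' ∩ J := by
        rw [hI', Finset.erase_inter]
        exact (Finset.erase_eq_of_notMem (by simp [hkJ])).symm
      have B := step2 hA (I' ∪ J) I' Finset.subset_union_left k hkU
      have IH := ih I' hss J
      have p1 := (pminor_posDef hA I').1
      have p2 := (pminor_posDef hA (I' ∪ J)).1
      have p3 := (pminor_posDef hA (I' ∩ J)).1
      have p4 := (pminor_posDef hA I).1
      have p5 := (pminor_posDef hA J).1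
      have p6 := (pminor_posDef hA (insert k (I' ∪ J))).1
      rw [hUeq, hcap]
      rw [hIeq]
      have H : (pminor A (insert k (I' ∪ J))).re * (pminor A (I' ∩ J)).re *
          (pminor A I').re ≤
          (pminor A (insert k I')).re * (pminor A J).re * (pminor A I').re := by
        nlinarith [mul_le_mul_of_nonneg_right B p3.le,
          mul_le_mul_of_nonneg_left IH (le_of_lt ((hIeq ▸ p4 : (0:ℝ) < _)))]
      exact le_of_mul_le_mul_right H p1

end Steps

/-- For a positive definite Hermitian matrix `A`, the set function
`I ↦ log det A[I]` is submodular (with `log det A[∅] = 0`). -/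
theorem logdet_principal_submodular {m : ℕ} (A : Matrix (Fin m) (Fin m) ℂ)
    (hA : A.PosDef) (I J : Finset (Fin m)) :
    Real.log (pminor A (I ∪ J)).re + Real.log (pminor A (I ∩ J)).re ≤
      Real.log (pminor A I).re + Real.log (pminor A J).re := by
  have p1 := (pminor_posDef hA (I ∪ J)).1
  have p2 := (pminor_posDef hA (I ∩ J)).1
  have p3 := (pminor_posDef hA I).1
  have p4 := (pminor_posDef hA J).1
  rw [← Real.log_mul p1.ne' p2.ne', ← Real.log_mul p3.ne' p4.ne']
  exact Real.log_le_log (mul_pos p1 p2) (step3 hA I J)
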